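/- Let G be a group with elements a, b, c, d, e, f, each of order dividing 2, satisfying the braid relations aba = bab, bdb = dbd, dfd = fdf, fef = efe, ece = cec, cac = aca, the commutation relations [a,d]=[a,e]=[a,f]=[b,c]=[b,e]=[b,f]=[d,e]=[d,c]=[c,f]=1, and the relation c·a·b·a·c = d·f·e·f·d. Then b·a·c·e·f = a·c·e·f·d in G. -/

import Mathlib

open scoped commutatorElement

theorem stmt1 {G : Type*} [Group G] (a b c d e f : G)
    (ha : a ^ 2 = 1) (hb : b ^ 2 = 1) (hc : c ^ 2 = 1)
    (hd : d ^ 2 = 1) (he : e ^ 2 = 1) (hf : f ^ 2 = 1)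
    (br1 : a * b * a = b * a * b) (br2 : b * d * b = d * b * d)
    (br3 : d * f * d = f * d * f) (br4 : f * e * f = e * f * e)
    (br5 : e * c * e = c * e * c) (br6 : c * a * c = a * c * a)
    (c1 : ⁅a, d⁆ = 1) (c2 : ⁅a, e⁆ = 1) (c3 : ⁅a, f⁆ = 1)
    (c4 : ⁅b, c⁆ = 1) (c5 : ⁅b, e⁆ = 1) (c6 : ⁅b, f⁆ = 1)
    (c7 : ⁅d, e⁆ = 1) (c8 : ⁅d, c⁆ = 1) (c9 : ⁅c, f⁆ = 1)
    (hrel : c * a * b * a * c = d * f * e * f * d) :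
    b * a * c * e * f = a * c * e * f * d := by
  have ha2 : a * a = 1 := by rw [← pow_two]; exact ha
  have hc2 : c * c = 1 := by rw [← pow_two]; exact hc
  have he2 : e * e = 1 := by rw [← pow_two]; exact he
  have hf2 : f * f = 1 := by rw [← pow_two]; exact hf
  have ha' : ∀ x : G, a * (a * x) = x := fun x => by rw [← mul_assoc, ha2, one_mul]
  have hc' : ∀ x : G, c * (c * x) = x := fun x => by rw [← mul_assoc, hc2, one_mul]
  have he' : ∀ x : G, e * (e * x) = x := fun x => by rw [← mul_assoc, he2, one_mul]
  have hdeComm : d * e = e * d := commutatorElement_eq_one_iff_mul_comm.mp c7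
  have hde : ∀ x : G, d * (e * x) = e * (d * x) := fun x => by
    rw [← mul_assoc, hdeComm, mul_assoc]
  have br4R : ∀ x : G, f * (e * (f * x)) = e * (f * (e * x)) := fun x => by
    simp only [← mul_assoc]; rw [br4]
  have br3R : ∀ x : G, d * (f * (d * x)) = f * (d * (f * x)) := fun x => by
    simp only [← mul_assoc]; rw [br3]
  have hrelR : ∀ x : G, c * (a * (b * (a * (c * x)))) = d * (f * (e * (f * (d * x)))) :=
    fun x => by simp only [← mul_assoc]; rw [hrel]
  have h : c * (a * (b * (a * (c * (e * f))))) = c * (a * (a * (c * (e * (f * d))))) := by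
    rw [ha', hc', hrelR, hde, br4R, he', hde, br3R, hf2, mul_one]
  have h2 := mul_left_cancel (mul_left_cancel h)
  simp only [mul_assoc]
  exact h2
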